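/- arXiv:2408.01477 — 2 statements merged into one kernel-verified Lean document; each statement's English description precedes it below -/
import Mathlib

section
/- Let k ≥ 1 and n = 2^{k−1} + k. Then every Boolean function f : F_2^n → F_2 is constant on some k-dimensional flat of F_2^n; i.e., g(n, k) = 0 for n ≥ 2^{k−1} + k. -/
open scoped Classical

noncomputable section

/-- Boolean functions in `n` variables. -/
abbrev BF (n : ℕ) := (Fin n → ZMod 2) → ZMod 2

/-- `A` is a `k`-dimensional flat (coset of a `k`-dimensional linear subspace) of `𝔽₂ⁿ`. -/
def IsFlat {n : ℕ} (A : Set (Fin n → ZMod 2)) (k : ℕ) : Prop :=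
  ∃ (W : Submodule (ZMod 2) (Fin n → ZMod 2)) (v : Fin n → ZMod 2),
    Module.finrank (ZMod 2) W = k ∧ A = (fun w => v + w) '' (W : Set (Fin n → ZMod 2))

/-- The sum (parity) of `f` over a subset of `𝔽₂ⁿ`. -/
def flatSum {n : ℕ} (f : BF n) (A : Set (Fin n → ZMod 2)) : ZMod 2 :=
  ∑ x ∈ A.toFinite.toFinset, f x

/-- The restriction of `f` to `A` has algebraic degree at most `d`:
by the standard parity criterion, this holds iff the sum of `f` over every
`(d+1)`-dimensional flat contained in `A` vanishes. -/
def DegLE {n : ℕ} (f : BF n) (A : Set (Fin n → ZMod 2)) (d : ℕ) : Prop :=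
  ∀ B : Set (Fin n → ZMod 2), IsFlat B (d + 1) → B ⊆ A → flatSum f B = 0

/-- The algebraic degree of the restriction of `f` to `A`. -/
def degOn {n : ℕ} (f : BF n) (A : Set (Fin n → ZMod 2)) : ℕ :=
  sInf {d | DegLE f A d}

/-- `α(f, k)`: the minimal algebraic degree of `f` restricted to a `k`-dimensional flat. -/
def alphaDeg {n : ℕ} (f : BF n) (k : ℕ) : ℕ :=
  sInf {d | ∃ A, IsFlat A k ∧ degOn f A = d}

/-- `g(n, k) = max_f α(f, k)`. -/
def gdeg (n k : ℕ) : ℕ :=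
  sSup {m | ∃ f : BF n, alphaDeg f k = m}

/-- The nonlinearity of the restriction of `f` to `A`: the minimal Hamming distance,
on `A`, from `f` to an affine function. -/
def nlOn {n : ℕ} (f : BF n) (A : Set (Fin n → ZMod 2)) : ℕ :=
  sInf {m | ∃ (a : Fin n → ZMod 2) (c : ZMod 2),
    m = (A.toFinite.toFinset.filter (fun x => f x ≠ (∑ i, a i * x i) + c)).card}

/-! ### Auxiliary lemmas -/

lemma zmod2_cases' (c : ZMod 2) : c = 0 ∨ c = 1 := by revert c; decide

lemma zmod2_add_self' (c : ZMod 2) : c + c = 0 := by revert c; decide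

lemma vadd_self' {n : ℕ} (v : Fin n → ZMod 2) : v + v = 0 := by
  funext i
  have h : ∀ c : ZMod 2, c + c = 0 := by decide
  exact h (v i)

lemma card_V' (n : ℕ) : Fintype.card (Fin n → ZMod 2) = 2 ^ n := by
  simp [ZMod.card]

lemma finrank_sup_span' {n : ℕ} (W : Submodule (ZMod 2) (Fin n → ZMod 2))
    (a : Fin n → ZMod 2) (ha : a ∉ W) :
    Module.finrank (ZMod 2) ↥(W ⊔ Submodule.span (ZMod 2) {a}) =
      Module.finrank (ZMod 2) ↥W + 1 := by
  have ha0 : a ≠ 0 := fun h => ha (h ▸ W.zero_mem)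
  have hinf : W ⊓ Submodule.span (ZMod 2) {a} = ⊥ := by
    rw [eq_bot_iff]
    intro x hx
    rw [Submodule.mem_inf] at hx
    obtain ⟨hxW, hxa⟩ := hx
    rw [Submodule.mem_span_singleton] at hxa
    obtain ⟨c, rfl⟩ := hxa
    rcases zmod2_cases' c with rfl | rfl
    · simp
    · exact absurd (by simpa using hxW) ha
  have h := Submodule.finrank_sup_add_finrank_inf_eq W (Submodule.span (ZMod 2) {a})
  rw [hinf] at h
  simpa [finrank_span_singleton ha0] using h

lemma card_submodule' {n : ℕ} (W : Submodule (ZMod 2) (Fin n → ZMod 2)) :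
    Fintype.card ↥W = 2 ^ Module.finrank (ZMod 2) ↥W := by
  have := Module.card_eq_pow_finrank (K := ZMod 2) (V := ↥W)
  simpa [ZMod.card] using this

lemma filter_card_eq' {n : ℕ} (T : Finset (Fin n → ZMod 2)) (x : Fin n → ZMod 2) :
    (Finset.univ.filter fun a => x + a ∈ T).card = T.card := by
  apply Finset.card_bij (fun a _ => x + a)
  · intro a ha; exact (Finset.mem_filter.1 ha).2
  · intro a _ b _ h; exact add_left_cancel h
  · intro t ht
    refine ⟨x + t, Finset.mem_filter.2 ⟨Finset.mem_univ _, ?_⟩, ?_⟩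
    · rw [← add_assoc, vadd_self', zero_add]; exact ht
    · rw [← add_assoc, vadd_self', zero_add]

lemma sum_c_univ' {n : ℕ} (T : Finset (Fin n → ZMod 2)) :
    ∑ a : Fin n → ZMod 2, (T.filter fun x => x + a ∈ T).card = T.card * T.card := by
  simp_rw [Finset.card_filter]
  rw [Finset.sum_comm]
  have h : ∀ x ∈ T, (∑ a : Fin n → ZMod 2, if x + a ∈ T then 1 else 0) = T.card := by
    intro x _
    rw [← Finset.card_filter]
    exact filter_card_eq' T x
  rw [Finset.sum_congr rfl h, Finset.sum_const, smul_eq_mul]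

lemma sum_c_sub' {n : ℕ} (T : Finset (Fin n → ZMod 2)) (Wf : Finset (Fin n → ZMod 2))
    (hW : ∀ x ∈ T, ∀ w ∈ Wf, x + w ∈ T) :
    ∑ a ∈ Wf, (T.filter fun x => x + a ∈ T).card = T.card * Wf.card := by
  simp_rw [Finset.card_filter]
  rw [Finset.sum_comm]
  have h : ∀ x ∈ T, (∑ a ∈ Wf, if x + a ∈ T then 1 else 0) = Wf.card := by
    intro x hx
    rw [Finset.sum_congr rfl (fun a ha => if_pos (hW x hx a ha)), Finset.sum_const,
      smul_eq_mul, mul_one]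
  rw [Finset.sum_congr rfl h, Finset.sum_const, smul_eq_mul]

lemma arith_key' (J P E' M s : ℕ) (hJ : 1 ≤ J) (hP : 2 * J ≤ P)
    (hME : E' * P ≤ M + J) (hM2 : 2 * M ≤ E' * P * P)
    (hkey : M * M ≤ E' * P * P * s + 2 * J * M) : E' ≤ s + 2 * J := by
  by_contra hcon
  push_neg at hcon
  have hs : s + 2 * J + 1 ≤ E' := hcon
  have h1 : E' * P * (E' * P) ≤ (M + J) * (M + J) := Nat.mul_le_mul hME hME
  have h2 : E' * P * (E' * P) ≤ E' * P * P * s + 4 * J * M + J * J := by nlinarith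
  have h3 : 4 * J * M ≤ 2 * J * (E' * P * P) := by nlinarith
  have h4 : E' * P * P * (s + 2 * J + 1) ≤ E' * P * P * E' := Nat.mul_le_mul_left _ hs
  have h5 : E' * P * P ≤ J * J := by nlinarith
  have h6 : 2 * J + 1 ≤ E' := by omega
  have h7 : (2 * J + 1) * (2 * J) * (2 * J) ≤ E' * P * P :=
    Nat.mul_le_mul (Nat.mul_le_mul h6 hP) hP
  nlinarith

lemma inv_step' {n : ℕ} (T : Finset (Fin n → ZMod 2))
    (W : Submodule (ZMod 2) (Fin n → ZMod 2)) (a : Fin n → ZMod 2)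
    (hinv : ∀ x ∈ T, ∀ w ∈ W, x + w ∈ T) :
    ∀ x ∈ T.filter (fun x => x + a ∈ T), ∀ w ∈ W ⊔ Submodule.span (ZMod 2) {a},
      x + w ∈ T.filter (fun x => x + a ∈ T) := by
  intro x hx w hw
  obtain ⟨hx1, hx2⟩ := Finset.mem_filter.1 hx
  rw [Submodule.mem_sup] at hw
  obtain ⟨u, hu, z, hz, rfl⟩ := hw
  rw [Submodule.mem_span_singleton] at hz
  obtain ⟨c, rfl⟩ := hz
  rcases zmod2_cases' c with rfl | rfl
  · rw [zero_smul, add_zero]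
    refine Finset.mem_filter.2 ⟨hinv x hx1 u hu, ?_⟩
    have := hinv _ hx2 u hu
    rwa [add_right_comm] at this
  · rw [one_smul]
    refine Finset.mem_filter.2 ⟨?_, ?_⟩
    · have := hinv _ hx2 u hu
      have heq : x + a + u = x + (u + a) := by abel
      rwa [heq] at this
    · have heq : x + (u + a) + a = x + u + (a + a) := by abel
      rw [heq, vadd_self', add_zero]
      exact hinv x hx1 u hu

/-- Main induction: at each stage `j` we have a subspace `W` of dimension `j` and
two `W`-invariant sets on which `f` is constant `0` resp. `1`, of large total size. -/
lemma main_ind' {n : ℕ} (f : BF n) :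
    ∀ j e, 2 ^ j + e = n + 1 →
    ∃ (W : Submodule (ZMod 2) (Fin n → ZMod 2)) (T0 T1 : Finset (Fin n → ZMod 2)),
      Module.finrank (ZMod 2) ↥W = j ∧
      (∀ x ∈ T0, f x = 0) ∧ (∀ x ∈ T1, f x = 1) ∧
      (∀ x ∈ T0, ∀ w ∈ W, x + w ∈ T0) ∧ (∀ x ∈ T1, ∀ w ∈ W, x + w ∈ T1) ∧
      2 ^ e ≤ T0.card + T1.card + 2 ^ j := by
  intro j
  induction j with
  | zero =>
    intro e he
    have hen : e = n := by norm_num at he; omega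
    refine ⟨⊥, Finset.univ.filter (fun x => f x = 0),
      Finset.univ.filter (fun x => f x = 1), finrank_bot _ _, ?_, ?_, ?_, ?_, ?_⟩
    · intro x hx; exact (Finset.mem_filter.1 hx).2
    · intro x hx; exact (Finset.mem_filter.1 hx).2
    · intro x hx w hw
      rw [Submodule.mem_bot] at hw
      subst hw; rwa [add_zero]
    · intro x hx w hw
      rw [Submodule.mem_bot] at hw
      subst hw; rwa [add_zero]
    · have h1 : (Finset.univ.filter (fun x : Fin n → ZMod 2 => f x = 1)) =
          (Finset.univ.filter (fun x : Fin n → ZMod 2 => ¬ f x = 0)) := by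
        apply Finset.filter_congr
        intro x _
        rcases zmod2_cases' (f x) with h | h <;> simp [h]
      rw [h1, Finset.card_filter_add_card_filter_not, Finset.card_univ, card_V', hen]
      omega
  | succ j ih =>
    intro e' he'
    have hsplit : 2 ^ (j + 1) = 2 ^ j + 2 ^ j := by ring
    have he : 2 ^ j + (e' + 2 ^ j) = n + 1 := by omega
    obtain ⟨W, T0, T1, hrk, hv0, hv1, hi0, hi1, hcard⟩ := ih (e' + 2 ^ j) he
    set Wf : Finset (Fin n → ZMod 2) := (W : Set (Fin n → ZMod 2)).toFinset with hWf
    have hWmem : ∀ w, w ∈ Wf ↔ w ∈ W := by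
      intro w; rw [hWf, Set.mem_toFinset]; rfl
    have hWcard : Wf.card = 2 ^ j := by
      rw [hWf, Set.toFinset_card]
      rw [← hrk]
      exact card_submodule' W
    have hpos : (1 : ℕ) ≤ 2 ^ j := Nat.one_le_two_pow
    have hJn : 2 ^ j ≤ n := by
      have : (1 : ℕ) ≤ e' + 2 ^ j := by omega
      omega
    have hjn : j < n := lt_of_lt_of_le Nat.lt_two_pow_self hJn
    have hne : (Finset.univ \ Wf).Nonempty := by
      rw [← Finset.card_pos, Finset.card_sdiff_of_subset (Finset.subset_univ _), Finset.card_univ,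
        card_V', hWcard]
      have : (2 : ℕ) ^ j < 2 ^ n := Nat.pow_lt_pow_right one_lt_two hjn
      omega
    obtain ⟨a, hamem, hamax⟩ := Finset.exists_max_image (Finset.univ \ Wf)
      (fun a => (T0.filter fun x => x + a ∈ T0).card +
        (T1.filter fun x => x + a ∈ T1).card) hne
    have haW : a ∉ W := by
      have := (Finset.mem_sdiff.1 hamem).2
      rwa [hWmem] at this
    set s := (T0.filter fun x => x + a ∈ T0).card + (T1.filter fun x => x + a ∈ T1).card
      with hs
    set M := T0.card + T1.card with hM
    -- counting
    have hWsub : Finset.univ \ Wf ⊆ Finset.univ := Finset.subset_univ _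
    have hsum_split : ∀ T : Finset (Fin n → ZMod 2), (∀ x ∈ T, ∀ w ∈ W, x + w ∈ T) →
        (∑ b ∈ Finset.univ \ Wf, (T.filter fun x => x + b ∈ T).card) + T.card * 2 ^ j
          = T.card * T.card := by
      intro T hinv
      have h1 := Finset.sum_sdiff (f := fun b => (T.filter fun x => x + b ∈ T).card)
        (Finset.subset_univ Wf)
      have h2 : ∑ b ∈ Wf, (T.filter fun x => x + b ∈ T).card = T.card * Wf.card :=
        sum_c_sub' T Wf (fun x hx w hw => hinv x hx w ((hWmem w).1 hw))
      rw [h2, hWcard] at h1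
      rw [← sum_c_univ' T, ← h1]
    have hs0 := hsum_split T0 hi0
    have hs1 := hsum_split T1 hi1
    have hmax : (∑ b ∈ Finset.univ \ Wf, ((T0.filter fun x => x + b ∈ T0).card +
        (T1.filter fun x => x + b ∈ T1).card)) ≤ 2 ^ n * s := by
      calc (∑ b ∈ Finset.univ \ Wf, ((T0.filter fun x => x + b ∈ T0).card +
          (T1.filter fun x => x + b ∈ T1).card))
          ≤ (Finset.univ \ Wf).card • s := Finset.sum_le_card_nsmul _ _ s hamax
        _ = (Finset.univ \ Wf).card * s := smul_eq_mul _ _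
        _ ≤ 2 ^ n * s := by
            apply Nat.mul_le_mul_right
            calc (Finset.univ \ Wf).card ≤ Finset.univ.card := Finset.card_le_univ _
              _ = 2 ^ n := by rw [Finset.card_univ, card_V']
    have hsum_add : (∑ b ∈ Finset.univ \ Wf, ((T0.filter fun x => x + b ∈ T0).card +
        (T1.filter fun x => x + b ∈ T1).card)) =
        (∑ b ∈ Finset.univ \ Wf, (T0.filter fun x => x + b ∈ T0).card) +
        (∑ b ∈ Finset.univ \ Wf, (T1.filter fun x => x + b ∈ T1).card) :=
      Finset.sum_add_distrib
    have hdisj : Disjoint T0 T1 := by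
      rw [Finset.disjoint_left]
      intro x hx0 hx1
      have h0 := hv0 x hx0
      have h1 := hv1 x hx1
      rw [h0] at h1
      exact absurd h1 (by decide)
    have hMle : M ≤ 2 ^ n := by
      rw [hM, ← Finset.card_union_of_disjoint hdisj]
      calc (T0 ∪ T1).card ≤ Finset.univ.card := Finset.card_le_univ _
        _ = 2 ^ n := by rw [Finset.card_univ, card_V']
    -- the key quadratic inequality
    have hkey : M * M ≤ 2 ^ (n + 1) * s + 2 * 2 ^ j * M := by
      have hq : M * M ≤ 2 * (T0.card * T0.card + T1.card * T1.card) := by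
        rw [hM]
        zify
        nlinarith [sq_nonneg ((T0.card : ℤ) - (T1.card : ℤ))]
      have hexp : 2 ^ j * M = T0.card * 2 ^ j + T1.card * 2 ^ j := by rw [hM]; ring
      have hA : (∑ b ∈ Finset.univ \ Wf, (Finset.filter (fun x => x + b ∈ T0) T0).card) +
          (∑ b ∈ Finset.univ \ Wf, (Finset.filter (fun x => x + b ∈ T1) T1).card) +
          2 ^ j * M = T0.card * T0.card + T1.card * T1.card := by
        rw [hexp]
        linarith [hs0, hs1]
      have hB : T0.card * T0.card + T1.card * T1.card ≤ 2 ^ n * s + 2 ^ j * M := by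
        linarith [hmax, hsum_add, hA]
      have hC : (2 : ℕ) ^ (n + 1) * s = 2 * (2 ^ n * s) := by rw [pow_succ]; ring
      have hD : 2 * 2 ^ j * M = 2 * (2 ^ j * M) := by ring
      linarith
    -- apply arithmetic lemma
    have hEP : (2 : ℕ) ^ (e' + 2 ^ j) = 2 ^ e' * 2 ^ (2 ^ j) := by rw [pow_add]
    have hn1 : (2 : ℕ) ^ (n + 1) = 2 ^ e' * 2 ^ (2 ^ j) * 2 ^ (2 ^ j) := by
      rw [← pow_add, ← pow_add]
      congr 1
      omega
    have harith : 2 ^ e' ≤ s + 2 * 2 ^ j := by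
      apply arith_key' (2 ^ j) (2 ^ (2 ^ j)) (2 ^ e') M s
      · exact hpos
      · have : j + 1 ≤ 2 ^ j := Nat.lt_two_pow_self
        calc 2 * 2 ^ j = 2 ^ (j + 1) := by ring
          _ ≤ 2 ^ (2 ^ j) := Nat.pow_le_pow_right (by norm_num) this
      · rw [← hEP]; exact hcard
      · rw [← hn1]
        calc 2 * M ≤ 2 * 2 ^ n := by omega
          _ = 2 ^ (n + 1) := by ring
      · rw [← hn1]; exact hkey
    refine ⟨W ⊔ Submodule.span (ZMod 2) {a},
      T0.filter (fun x => x + a ∈ T0), T1.filter (fun x => x + a ∈ T1), ?_, ?_, ?_, ?_, ?_, ?_⟩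
    · rw [finrank_sup_span' W a haW, hrk]
    · intro x hx; exact hv0 x (Finset.mem_filter.1 hx).1
    · intro x hx; exact hv1 x (Finset.mem_filter.1 hx).1
    · exact inv_step' T0 W a hi0
    · exact inv_step' T1 W a hi1
    · have : 2 * 2 ^ j = 2 ^ (j + 1) := by ring
      omega


/-- From a `(k-1)`-dimensional invariant monochromatic set with more than one coset,
extract a `k`-dimensional monochromatic flat. -/
lemma final_step' {n k : ℕ} (hk : 1 ≤ k) (f : BF n) (c : ZMod 2)
    (W : Submodule (ZMod 2) (Fin n → ZMod 2))
    (hrk : Module.finrank (ZMod 2) ↥W = k - 1)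
    (T : Finset (Fin n → ZMod 2))
    (hval : ∀ x ∈ T, f x = c) (hinv : ∀ x ∈ T, ∀ w ∈ W, x + w ∈ T)
    (hcard : 2 ^ (k - 1) + 1 ≤ T.card) :
    ∃ A : Set (Fin n → ZMod 2), IsFlat A k ∧ ∀ x ∈ A, f x = c := by
  have hTne : T.Nonempty := Finset.card_pos.1 (lt_of_lt_of_le (Nat.succ_pos _) hcard)
  obtain ⟨x, hx⟩ := hTne
  set Wf : Finset (Fin n → ZMod 2) := (W : Set (Fin n → ZMod 2)).toFinset with hWf
  have hWmem : ∀ w, w ∈ Wf ↔ w ∈ W := by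
    intro w; rw [hWf, Set.mem_toFinset]; rfl
  have hWcard : Wf.card = 2 ^ (k - 1) := by
    rw [hWf, Set.toFinset_card, ← hrk]
    exact card_submodule' W
  set C : Finset (Fin n → ZMod 2) := Wf.image (fun w => x + w) with hC
  have hCcard : C.card = 2 ^ (k - 1) := by
    rw [hC, Finset.card_image_of_injective _ (add_right_injective x), hWcard]
  have hCsub : C ⊆ T := by
    intro z hz
    rw [hC, Finset.mem_image] at hz
    obtain ⟨w, hw, rfl⟩ := hz
    exact hinv x hx w ((hWmem w).1 hw)
  have hex : ∃ y ∈ T, y ∉ C := by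
    by_contra hcon
    push_neg at hcon
    have : T ⊆ C := hcon
    have := Finset.card_le_card this
    omega
  obtain ⟨y, hyT, hyC⟩ := hex
  set a : Fin n → ZMod 2 := x + y with ha
  have hxa : x + a = y := by rw [ha, ← add_assoc, vadd_self', zero_add]
  have haW : a ∉ W := by
    intro haW
    apply hyC
    rw [hC, Finset.mem_image]
    exact ⟨a, (hWmem a).2 haW, hxa⟩
  refine ⟨(fun w => x + w) '' ((W ⊔ Submodule.span (ZMod 2) {a} :
      Submodule (ZMod 2) (Fin n → ZMod 2)) : Set (Fin n → ZMod 2)),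
    ⟨W ⊔ Submodule.span (ZMod 2) {a}, x, ?_, rfl⟩, ?_⟩
  · rw [finrank_sup_span' W a haW, hrk]
    omega
  · rintro z ⟨w', hw', rfl⟩
    rw [SetLike.mem_coe, Submodule.mem_sup] at hw'
    obtain ⟨u, hu, zz, hz, rfl⟩ := hw'
    rw [Submodule.mem_span_singleton] at hz
    obtain ⟨cc, rfl⟩ := hz
    rcases zmod2_cases' cc with rfl | rfl
    · rw [zero_smul, add_zero]
      exact hval _ (hinv x hx u hu)
    · rw [one_smul]
      show f (x + (u + a)) = c
      have heq : x + (u + a) = (x + a) + u := by abel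
      rw [heq, hxa]
      exact hval _ (hinv y hyT u hu)

/-- For `k ≥ 1` and `n ≥ 2^(k-1) + k`, every Boolean function on `𝔽₂ⁿ` is
constant on some `k`-dimensional flat; i.e. `g(n,k) = 0`. -/
theorem stmt17 {n k : ℕ} (hk : 1 ≤ k) (hn : 2 ^ (k - 1) + k ≤ n) :
    (∀ f : BF n, ∃ A : Set (Fin n → ZMod 2), IsFlat A k ∧
      ∃ c : ZMod 2, ∀ x ∈ A, f x = c) ∧
    gdeg n k = 0 := by
  have hpow : (1 : ℕ) ≤ 2 ^ (k - 1) := Nat.one_le_two_pow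
  -- Part 1
  have part1 : ∀ f : BF n, ∃ A : Set (Fin n → ZMod 2), IsFlat A k ∧
      ∃ c : ZMod 2, ∀ x ∈ A, f x = c := by
    intro f
    have he : 2 ^ (k - 1) + (n + 1 - 2 ^ (k - 1)) = n + 1 := by omega
    obtain ⟨W, T0, T1, hrk, hv0, hv1, hi0, hi1, hcard⟩ :=
      main_ind' f (k - 1) (n + 1 - 2 ^ (k - 1)) he
    have hekk : k + 1 ≤ n + 1 - 2 ^ (k - 1) := by omega
    have hbig : 2 ^ (k + 1) ≤ T0.card + T1.card + 2 ^ (k - 1) :=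
      le_trans (Nat.pow_le_pow_right (by norm_num) hekk) hcard
    have hksplit : 2 ^ (k + 1) = 4 * 2 ^ (k - 1) := by
      have : k + 1 = (k - 1) + 2 := by omega
      rw [this, pow_add]
      ring
    have hM3 : 3 * 2 ^ (k - 1) ≤ T0.card + T1.card := by omega
    have hone : 2 ^ (k - 1) + 1 ≤ max T0.card T1.card := by
      rcases Nat.le_total T0.card T1.card with h | h
      · rw [Nat.max_eq_right h]; omega
      · rw [Nat.max_eq_left h]; omega
    rcases Nat.le_total T0.card T1.card with h | h
    · have h1 : 2 ^ (k - 1) + 1 ≤ T1.card := by rw [Nat.max_eq_right h] at hone; exact hone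
      obtain ⟨A, hA, hAc⟩ := final_step' hk f 1 W hrk T1 hv1 hi1 h1
      exact ⟨A, hA, 1, hAc⟩
    · have h0 : 2 ^ (k - 1) + 1 ≤ T0.card := by rw [Nat.max_eq_left h] at hone; exact hone
      obtain ⟨A, hA, hAc⟩ := final_step' hk f 0 W hrk T0 hv0 hi0 h0
      exact ⟨A, hA, 0, hAc⟩
  refine ⟨part1, ?_⟩
  -- Part 2 : gdeg = 0
  have halpha : ∀ f : BF n, alphaDeg f k = 0 := by
    intro f
    obtain ⟨A, hA, c, hc⟩ := part1 f
    have hdeg : degOn f A = 0 := by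
      rw [degOn, Nat.sInf_eq_zero]
      left
      intro B hB hBA
      obtain ⟨Wb, v, hrkb, rfl⟩ := hB
      -- Wb has rank 1, so (Wb : Set) = {0, w} for some w ≠ 0
      have hcardb : Fintype.card ↥Wb = 2 := by
        rw [card_submodule' Wb, hrkb]; norm_num
      obtain ⟨w, hw⟩ := Fintype.exists_ne_of_one_lt_card (by omega) (0 : ↥Wb)
      have hw0 : (w : Fin n → ZMod 2) ≠ 0 := fun h => hw (Subtype.ext h)
      have hpair : ((Wb : Set (Fin n → ZMod 2)).toFinset : Finset (Fin n → ZMod 2)) =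
          {0, (w : Fin n → ZMod 2)} := by
        apply Finset.eq_of_superset_of_card_ge
        · intro z hz
          rw [Finset.mem_insert, Finset.mem_singleton] at hz
          rw [Set.mem_toFinset]
          rcases hz with rfl | rfl
          · exact Wb.zero_mem
          · exact w.2
        · have h2 : ((Wb : Set (Fin n → ZMod 2)).toFinset).card = 2 := by
            rw [Set.toFinset_card]; exact hcardb
          rw [h2, Finset.card_insert_of_notMem (by simpa using hw0.symm),
            Finset.card_singleton]
      have hWbset : (Wb : Set (Fin n → ZMod 2)) = {0, (w : Fin n → ZMod 2)} := by
        rw [← Set.coe_toFinset (Wb : Set (Fin n → ZMod 2)), hpair]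
        simp
      have hBset : (fun u => v + u) '' (Wb : Set (Fin n → ZMod 2)) =
          {v, v + (w : Fin n → ZMod 2)} := by
        rw [hWbset]
        simp [Set.image_insert_eq]
      rw [flatSum]
      have hfin : ((fun u => v + u) '' (Wb : Set (Fin n → ZMod 2))).toFinite.toFinset =
          ({v, v + (w : Fin n → ZMod 2)} : Finset (Fin n → ZMod 2)) := by
        ext z
        rw [Set.Finite.mem_toFinset, hBset]
        simp
      rw [hfin]
      have hne : v ≠ v + (w : Fin n → ZMod 2) := by
        intro h
        apply hw0
        have := congrArg (fun z => z - v) h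
        simpa using this.symm
      rw [Finset.sum_pair hne]
      have hvA : v ∈ A := by
        apply hBA
        exact ⟨0, Wb.zero_mem, by simp⟩
      have hvwA : v + (w : Fin n → ZMod 2) ∈ A := by
        apply hBA
        exact ⟨w, w.2, rfl⟩
      rw [hc v hvA, hc _ hvwA]
      exact zmod2_add_self' c
    rw [alphaDeg, Nat.sInf_eq_zero]
    left
    exact ⟨A, hA, hdeg⟩
  have hset : {m | ∃ f : BF n, alphaDeg f k = m} = {0} := by
    ext m
    constructor
    · rintro ⟨f, rfl⟩
      exact halpha f
    · rintro rfl
      exact ⟨fun _ => 0, halpha _⟩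
  rw [gdeg, hset]
  exact csSup_singleton 0

end
end

section
/- Let k > d ≥ 0 be integers and n ≥ 2^{k−1} + k − ⌊2^{d−1}⌋. Then for every Boolean function f : F_2^n → F_2 there exists a k-dimensional flat of F_2^n on which the restriction of f has algebraic degree at most d; i.e., g(n,k) ≤ d. -/
open scoped Classical

noncomputable section

namespace Stmt18Aux

open Module Finset

variable {n : ℕ}

abbrev G (n : ℕ) := Fin n → ZMod 2

lemma zmod2_cases : ∀ t : ZMod 2, t = 0 ∨ t = 1 := by decide

lemma addselfG (x : G n) : x + x = 0 := by
  funext i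
  have h : ∀ a : ZMod 2, a + a = 0 := by decide
  show x i + x i = 0
  exact h (x i)

lemma finrank_sup_span (W : Submodule (ZMod 2) (G n)) (b : G n) (hb : b ∉ W) :
    finrank (ZMod 2) ↥(W ⊔ Submodule.span (ZMod 2) {b}) = finrank (ZMod 2) W + 1 := by
  have hb0 : b ≠ 0 := fun h => hb (h ▸ W.zero_mem)
  have hinf : W ⊓ Submodule.span (ZMod 2) {b} = ⊥ := by
    rw [eq_bot_iff]
    rintro x ⟨hxW, hxs⟩
    obtain ⟨t, rfl⟩ := Submodule.mem_span_singleton.mp hxs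
    rcases zmod2_cases t with rfl | rfl
    · simp
    · rw [one_smul] at hxW ⊢; exact absurd hxW hb
  have h := Submodule.finrank_sup_add_finrank_inf_eq W (Submodule.span (ZMod 2) {b})
  rw [hinf] at h
  simp only [finrank_bot, add_zero] at h
  rw [h, finrank_span_singleton hb0]

/-- invariant: `S` is a union of `W`-cosets on which `c` is constant. -/
def CInv (c : G n → ZMod 2) (W : Submodule (ZMod 2) (G n)) (S : Finset (G n)) : Prop :=
  ∀ x ∈ S, ∀ w ∈ W, x + w ∈ S ∧ c (x + w) = c x

lemma mem_sup_span (W : Submodule (ZMod 2) (G n)) (b : G n) (z : G n)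
    (hz : z ∈ W ⊔ Submodule.span (ZMod 2) {b}) : ∃ w ∈ W, z = w ∨ z = w + b := by
  rcases Submodule.mem_sup.mp hz with ⟨w, hw, y, hy, rfl⟩
  rcases Submodule.mem_span_singleton.mp hy with ⟨t, rfl⟩
  rcases zmod2_cases t with rfl | rfl
  · exact ⟨w, hw, Or.inl (by simp)⟩
  · exact ⟨w, hw, Or.inr (by rw [one_smul])⟩

lemma cinv_step (c : G n → ZMod 2) (W : Submodule (ZMod 2) (G n)) (S : Finset (G n))
    (hC : CInv c W S) (b : G n) :
    CInv c (W ⊔ Submodule.span (ZMod 2) {b})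
      (S.filter (fun x => x + b ∈ S ∧ c (x + b) = c x)) := by
  intro x hx z hz
  rw [Finset.mem_filter] at hx
  obtain ⟨hxS, hxbS, hxbc⟩ := hx
  rcases mem_sup_span W b z hz with ⟨w, hw, h | h⟩ <;> subst h
  · rw [Finset.mem_filter]
    have h1 := hC x hxS z hw
    have h2 := hC (x + b) hxbS z hw
    have e : x + b + z = x + z + b := by ring
    rw [e] at h2
    refine ⟨⟨h1.1, h2.1, ?_⟩, ?_⟩
    · rw [h2.2, hxbc, h1.2]
    · exact h1.2
  · rw [Finset.mem_filter]
    have h2 := hC (x + b) hxbS w hw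
    have e : x + (w + b) = x + b + w := by ring
    rw [e]
    have e2 : x + b + w + b = x + w := by
      have : x + b + w + b = x + w + (b + b) := by ring
      rw [this, addselfG, add_zero]
    refine ⟨⟨h2.1, ?_, ?_⟩, ?_⟩
    · rw [e2]; exact (hC x hxS w hw).1
    · rw [e2, h2.2, hxbc, (hC x hxS w hw).2]
    · rw [h2.2, hxbc]

def cnt (c : G n → ZMod 2) (S : Finset (G n)) (b : G n) : ℕ :=
  (S.filter (fun x => x + b ∈ S ∧ c (x + b) = c x)).card

lemma cnt_total (c : G n → ZMod 2) (S : Finset (G n)) :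
    ∑ b : G n, cnt c S b = ∑ γ : ZMod 2, (S.filter (fun x => c x = γ)).card ^ 2 := by
  have h1 : ∀ b : G n, cnt c S b = ∑ x ∈ S, (if (x + b ∈ S ∧ c (x + b) = c x) then 1 else 0) := by
    intro b; rw [cnt, card_filter]
  calc ∑ b : G n, cnt c S b
      = ∑ b : G n, ∑ x ∈ S, (if (x + b ∈ S ∧ c (x + b) = c x) then 1 else 0) :=
        Finset.sum_congr rfl (fun b _ => h1 b)
    _ = ∑ x ∈ S, ∑ b : G n, (if (x + b ∈ S ∧ c (x + b) = c x) then 1 else 0) := Finset.sum_comm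
    _ = ∑ x ∈ S, (S.filter (fun y => c y = c x)).card := by
        refine Finset.sum_congr rfl (fun x hx => ?_)
        rw [Fintype.sum_equiv (Equiv.addLeft x)
          (fun b => if (x + b ∈ S ∧ c (x + b) = c x) then (1:ℕ) else 0)
          (fun y => if (y ∈ S ∧ c y = c x) then (1:ℕ) else 0) (fun y => rfl)]
        · rw [card_filter]
          rw [← Finset.sum_subset (Finset.subset_univ S)
            (f := fun y => if (y ∈ S ∧ c y = c x) then (1:ℕ) else 0)
            (fun y _ hy => by simp [hy])]
          refine Finset.sum_congr rfl (fun y hy => ?_)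
          simp [hy]
    _ = ∑ γ : ZMod 2, ∑ x ∈ S.filter (fun x => c x = γ), (S.filter (fun y => c y = c x)).card := by
        rw [Finset.sum_fiberwise S c (fun x => (S.filter (fun y => c y = c x)).card)]
    _ = ∑ γ : ZMod 2, (S.filter (fun x => c x = γ)).card ^ 2 := by
        refine Finset.sum_congr rfl (fun γ _ => ?_)
        rw [Finset.sum_congr rfl (fun x hx => ?_), Finset.sum_const, smul_eq_mul, sq]
        have : c x = γ := (Finset.mem_filter.mp hx).2
        rw [this]

lemma cnt_of_mem (c : G n → ZMod 2) (S : Finset (G n)) (W : Submodule (ZMod 2) (G n))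
    (hC : CInv c W S) (b : G n) (hb : b ∈ W) :
    cnt c S b = S.card := by
  rw [cnt, Finset.filter_true_of_mem]
  intro x hx; exact hC x hx b hb

lemma counting (c : G n → ZMod 2) (S : Finset (G n)) (W : Submodule (ZMod 2) (G n))
    (hC : CInv c W S) (t : ℕ)
    (h : t * 2 ^ n + 2 ^ (finrank (ZMod 2) W) * S.card <
      (∑ γ : ZMod 2, (S.filter (fun x => c x = γ)).card ^ 2) + t * 2 ^ (finrank (ZMod 2) W)) :
    ∃ b, b ∉ W ∧ t < cnt c S b := by
  by_contra hcon
  push_neg at hcon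
  set Wf : Finset (G n) := (W : Set (G n)).toFinset with hWf
  have hmem : ∀ b : G n, b ∈ Wf ↔ b ∈ W := by intro b; simp [hWf]
  have hcard : Wf.card = 2 ^ (finrank (ZMod 2) W) := by
    rw [hWf, Set.toFinset_card]
    have := card_eq_pow_finrank (K := ZMod 2) (V := W)
    rwa [ZMod.card] at this
  have hsplit : ∑ b : G n, cnt c S b
      = ∑ b ∈ Wf, cnt c S b + ∑ b ∈ Finset.univ \ Wf, cnt c S b := by
    rw [← Finset.sum_sdiff (Finset.subset_univ Wf)]; ring
  have h1 : ∑ b ∈ Wf, cnt c S b = 2 ^ (finrank (ZMod 2) W) * S.card := by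
    rw [Finset.sum_congr rfl (fun b hb => cnt_of_mem c S W hC b ((hmem b).mp hb)),
      Finset.sum_const, smul_eq_mul, hcard]
  have h2 : ∑ b ∈ Finset.univ \ Wf, cnt c S b ≤ (Finset.univ \ Wf).card * t := by
    apply Finset.sum_le_card_nsmul
    intro b hb
    rw [Finset.mem_sdiff] at hb
    exact hcon b (fun hbW => hb.2 ((hmem b).mpr hbW))
  have h3 : (Finset.univ \ Wf).card + Wf.card = 2 ^ n := by
    rw [Finset.card_sdiff_of_subset (Finset.subset_univ Wf)]
    have : Wf.card ≤ (Finset.univ : Finset (G n)).card := Finset.card_le_card (Finset.subset_univ _)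
    have hu : (Finset.univ : Finset (G n)).card = 2 ^ n := by
      rw [Finset.card_univ]; simp [ZMod.card]
    omega
  have htot : (∑ γ : ZMod 2, (S.filter (fun x => c x = γ)).card ^ 2)
      ≤ 2 ^ (finrank (ZMod 2) W) * S.card + (Finset.univ \ Wf).card * t := by
    rw [← cnt_total, hsplit, h1]
    omega
  have h4 : (Finset.univ \ Wf).card + 2 ^ (finrank (ZMod 2) W) = 2 ^ n := by
    rw [← hcard]; exact h3
  have h5 : t * 2 ^ n + 2 ^ (finrank (ZMod 2) W) * S.card <
      2 ^ (finrank (ZMod 2) W) * S.card + (Finset.univ \ Wf).card * t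
        + t * 2 ^ (finrank (ZMod 2) W) := lt_of_lt_of_le h (by omega)
  have h6 : (Finset.univ \ Wf).card * t + t * 2 ^ (finrank (ZMod 2) W) = t * 2 ^ n := by
    rw [← h4]; ring
  omega

lemma two_sq (a b s : ℕ) (h : a + b = s) : s ^ 2 ≤ 2 * (a ^ 2 + b ^ 2) := by
  subst h; zify; nlinarith [sq_nonneg ((a:ℤ) - b)]

lemma key1 (n i Ai Ai' s : ℕ) (hAi : Ai + 2 ^ i = n + 1) (hAi' : Ai' + 2 ^ (i + 1) = n + 1)
    (hn : 2 ^ (i + 1) + i + 1 ≤ n) (hs : 2 ^ Ai ≤ s) :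
    2 * ((2 ^ Ai' - 1) * 2 ^ n) + 2 ^ (i + 1) * s
      < s ^ 2 + 2 * ((2 ^ Ai' - 1) * 2 ^ i) := by
  have hp : (2:ℕ) ^ (i + 1) = 2 * 2 ^ i := by ring
  have hii : i + 1 ≤ 2 ^ i := by have := Nat.lt_two_pow_self (n := i); omega
  have hAi1 : i + 1 ≤ Ai := by omega
  have hAi'1 : 1 ≤ Ai' := by omega
  have ht1 : (1:ℕ) ≤ 2 ^ Ai' - 1 := by
    have : (2:ℕ) ^ 1 ≤ 2 ^ Ai' := Nat.pow_le_pow_right (by norm_num) hAi'1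
    omega
  have hdouble : Ai + Ai = Ai' + n + 1 := by omega
  have hsq : 2 ^ Ai * 2 ^ Ai = 2 ^ Ai' * 2 ^ (n + 1) := by
    rw [← pow_add, ← pow_add, hdouble]; ring_nf
  have hs0 : 2 ^ (i + 1) ≤ 2 ^ Ai := Nat.pow_le_pow_right (by norm_num) hAi1
  have hAin : 2 ^ Ai * 2 ^ (i + 1) ≤ 2 ^ (n + 1) := by
    rw [← pow_add]; exact Nat.pow_le_pow_right (by norm_num) (by omega)
  obtain ⟨e, rfl⟩ : ∃ e, s = 2 ^ Ai + e := ⟨s - 2 ^ Ai, by omega⟩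
  have key : 2 ^ (i + 1) * e ≤ 2 ^ Ai * e := Nat.mul_le_mul_right e hs0
  have hsq2 : (2 ^ Ai + e) ^ 2 ≥ 2 ^ Ai * 2 ^ Ai + 2 ^ Ai * e := by
    have : (2 ^ Ai + e) ^ 2 = 2 ^ Ai * 2 ^ Ai + (2 ^ Ai * e + (2 ^ Ai * e + e * e)) := by ring
    omega
  have ht' : (2 ^ Ai' - 1) * 2 ^ (n + 1) + 2 ^ (n + 1) = 2 ^ Ai' * 2 ^ (n + 1) := by
    have h9 : 2 ^ Ai' - 1 + 1 = 2 ^ Ai' := by omega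
    calc (2 ^ Ai' - 1) * 2 ^ (n + 1) + 2 ^ (n + 1) = (2 ^ Ai' - 1 + 1) * 2 ^ (n + 1) := by ring
      _ = 2 ^ Ai' * 2 ^ (n + 1) := by rw [h9]
  have hgoal : 2 * ((2 ^ Ai' - 1) * 2 ^ n) + 2 ^ (i + 1) * (2 ^ Ai + e)
      < (2 ^ Ai * 2 ^ Ai + 2 ^ Ai * e) + 2 * ((2 ^ Ai' - 1) * 2 ^ i) := by
    have e1 : 2 * ((2 ^ Ai' - 1) * 2 ^ n) = (2 ^ Ai' - 1) * 2 ^ (n + 1) := by ring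
    rw [e1, hsq, ← ht']
    have e2 : 2 ^ (i+1) * (2 ^ Ai + e) = 2 ^ Ai * 2 ^ (i+1) + 2 ^ (i+1) * e := by ring
    rw [e2]
    have e3 : (1:ℕ) ≤ 2 * ((2 ^ Ai' - 1) * 2 ^ i) := by
      have h8 : 0 < (2 ^ Ai' - 1) * 2 ^ i := Nat.mul_pos (by omega) (pow_pos (by norm_num) i)
      omega
    omega
  calc 2 * ((2 ^ Ai' - 1) * 2 ^ n) + 2 ^ (i + 1) * (2 ^ Ai + e)
      < (2 ^ Ai * 2 ^ Ai + 2 ^ Ai * e) + 2 * ((2 ^ Ai' - 1) * 2 ^ i) := hgoal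
    _ ≤ (2 ^ Ai + e) ^ 2 + 2 * ((2 ^ Ai' - 1) * 2 ^ i) := by omega

lemma key2 (n w φ φ' s : ℕ) (h2φ : φ + φ = φ' + n) (hφw : w ≤ φ) (hB : φ + w ≤ n)
    (hC : 1 ≤ φ') (hs : 2 ^ φ ≤ s) :
    (2 ^ φ' - 1) * 2 ^ n + 2 ^ w * s < s ^ 2 + (2 ^ φ' - 1) * 2 ^ w := by
  have ht1 : (1:ℕ) ≤ 2 ^ φ' - 1 := by
    have : (2:ℕ) ^ 1 ≤ 2 ^ φ' := Nat.pow_le_pow_right (by norm_num) hC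
    omega
  have hsq : 2 ^ φ * 2 ^ φ = 2 ^ φ' * 2 ^ n := by rw [← pow_add, ← pow_add, h2φ]
  have hw : 2 ^ w ≤ 2 ^ φ := Nat.pow_le_pow_right (by norm_num) hφw
  have hwφ : 2 ^ φ * 2 ^ w ≤ 2 ^ n := by
    rw [← pow_add]; exact Nat.pow_le_pow_right (by norm_num) hB
  obtain ⟨e, rfl⟩ : ∃ e, s = 2 ^ φ + e := ⟨s - 2 ^ φ, by omega⟩
  have key : 2 ^ w * e ≤ 2 ^ φ * e := Nat.mul_le_mul_right e hw
  have hsq2 : (2 ^ φ + e) ^ 2 ≥ 2 ^ φ * 2 ^ φ + 2 ^ φ * e := by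
    have : (2 ^ φ + e) ^ 2 = 2 ^ φ * 2 ^ φ + (2 ^ φ * e + (2 ^ φ * e + e * e)) := by ring
    omega
  have ht' : (2 ^ φ' - 1) * 2 ^ n + 2 ^ n = 2 ^ φ' * 2 ^ n := by
    have h9 : 2 ^ φ' - 1 + 1 = 2 ^ φ' := by omega
    calc (2 ^ φ' - 1) * 2 ^ n + 2 ^ n = (2 ^ φ' - 1 + 1) * 2 ^ n := by ring
      _ = 2 ^ φ' * 2 ^ n := by rw [h9]
  have e2 : 2 ^ w * (2 ^ φ + e) = 2 ^ φ * 2 ^ w + 2 ^ w * e := by ring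
  have e3 : (1:ℕ) ≤ (2 ^ φ' - 1) * 2 ^ w := by
    have h8 : 0 < (2 ^ φ' - 1) * 2 ^ w := Nat.mul_pos (by omega) (pow_pos (by norm_num) w)
    omega
  calc (2 ^ φ' - 1) * 2 ^ n + 2 ^ w * (2 ^ φ + e)
      < 2 ^ φ * 2 ^ φ + 2 ^ φ * e + (2 ^ φ' - 1) * 2 ^ w := by
        rw [hsq, ← ht', e2]; omega
    _ ≤ (2 ^ φ + e) ^ 2 + (2 ^ φ' - 1) * 2 ^ w := by omega

lemma sum_zmod2 (F : ZMod 2 → ℕ) : ∑ γ : ZMod 2, F γ = F 0 + F 1 := by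
  have h : (Finset.univ : Finset (ZMod 2)) = {0, 1} := by decide
  rw [h, Finset.sum_pair (by decide : (0 : ZMod 2) ≠ 1)]

lemma filter_two (c : G n → ZMod 2) (S : Finset (G n)) :
    (S.filter (fun x => c x = 0)).card + (S.filter (fun x => c x = 1)).card = S.card := by
  have h : S.filter (fun x => ¬ (c x = 0)) = S.filter (fun x => c x = 1) := by
    apply Finset.filter_congr
    intro x _
    rcases zmod2_cases (c x) with h | h <;> simp [h]
  rw [← h]
  exact Finset.card_filter_add_card_filter_not _

/-- Phase 1: build a subspace of dimension `j` with many cosets on which `f` is constant. -/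
lemma phase1 (f : G n → ZMod 2) (j : ℕ) (hj : 2 ^ j + j ≤ n) :
    ∃ (W : Submodule (ZMod 2) (G n)) (S : Finset (G n)),
      finrank (ZMod 2) W = j ∧ CInv f W S ∧ 2 ^ (n + 1) ≤ S.card * 2 ^ (2 ^ j) := by
  induction j with
  | zero =>
    refine ⟨⊥, Finset.univ, finrank_bot _ _, ?_, ?_⟩
    · intro x hx w hw
      have : w = 0 := by simpa using hw
      subst this
      simp
    · have hu : (Finset.univ : Finset (G n)).card = 2 ^ n := by
        rw [Finset.card_univ]; simp [ZMod.card]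
      rw [hu, pow_succ]
      norm_num
  | succ j ih =>
    have h2 : (2:ℕ) ^ j ≤ 2 ^ (j + 1) := Nat.pow_le_pow_right (by norm_num) (by omega)
    obtain ⟨W, S, hrank, hC, hcard⟩ := ih (by omega)
    -- exponents
    have hAj : (n + 1 - 2 ^ j) + 2 ^ j = n + 1 := by omega
    have hAj' : (n + 1 - 2 ^ (j + 1)) + 2 ^ (j + 1) = n + 1 := by omega
    set Ai := n + 1 - 2 ^ j with hAidef
    set Ai' := n + 1 - 2 ^ (j + 1) with hAi'def
    have hs : 2 ^ Ai ≤ S.card := by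
      have h1 : 2 ^ Ai * 2 ^ (2 ^ j) = 2 ^ (n + 1) := by rw [← pow_add]; congr 1 <;> omega
      have := hcard
      rw [← h1] at this
      exact Nat.le_of_mul_le_mul_right this (pow_pos (by norm_num) _)
    have hkey := key1 n j Ai Ai' S.card hAj hAj' (by omega) hs
    have hsum := two_sq (S.filter (fun x => f x = 0)).card (S.filter (fun x => f x = 1)).card
      S.card (filter_two f S)
    have hcount : (2 ^ Ai' - 1) * 2 ^ n + 2 ^ (finrank (ZMod 2) W) * S.card <
        (∑ γ : ZMod 2, (S.filter (fun x => f x = γ)).card ^ 2)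
          + (2 ^ Ai' - 1) * 2 ^ (finrank (ZMod 2) W) := by
      rw [hrank, sum_zmod2 (fun γ => (S.filter (fun x => f x = γ)).card ^ 2)]
      have hpow : (2:ℕ) ^ (j + 1) * S.card = 2 * (2 ^ j * S.card) := by rw [pow_succ]; ring
      omega
    obtain ⟨b, hb, hcnt⟩ := counting f S W hC _ hcount
    refine ⟨W ⊔ Submodule.span (ZMod 2) {b},
      S.filter (fun x => x + b ∈ S ∧ f (x + b) = f x), ?_, cinv_step f W S hC b, ?_⟩
    · rw [finrank_sup_span W b hb, hrank]
    · have hge : 2 ^ Ai' ≤ (S.filter (fun x => x + b ∈ S ∧ f (x + b) = f x)).card := by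
        have h1 : (1:ℕ) ≤ 2 ^ Ai' := Nat.one_le_two_pow
        have := hcnt
        rw [cnt] at this
        omega
      calc 2 ^ (n + 1) = 2 ^ Ai' * 2 ^ (2 ^ (j + 1)) := by rw [← pow_add]; congr 1 <;> omega
        _ ≤ _ := Nat.mul_le_mul_right _ hge

/-- Trivial coloring form of `CInv`. -/
def TInv (W : Submodule (ZMod 2) (G n)) (S : Finset (G n)) : Prop :=
  ∀ x ∈ S, ∀ w ∈ W, x + w ∈ S

lemma tinv_iff (W : Submodule (ZMod 2) (G n)) (S : Finset (G n)) :
    CInv (fun _ => 0) W S ↔ TInv W S := by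
  constructor
  · intro h x hx w hw; exact (h x hx w hw).1
  · intro h x hx w hw; exact ⟨h x hx w hw, rfl⟩

lemma sumsq_trivial (c : G n → ZMod 2) (hc : ∀ x, c x = 0) (S : Finset (G n)) :
    ∑ γ : ZMod 2, (S.filter (fun x => c x = γ)).card ^ 2 = S.card ^ 2 := by
  rw [sum_zmod2]
  have h0 : S.filter (fun x => c x = 0) = S := Finset.filter_true_of_mem (fun x _ => hc x)
  have h1 : S.filter (fun x => c x = 1) = ∅ := Finset.filter_false_of_mem (fun x _ => by
    simp [hc x])
  rw [h0, h1]
  simp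

lemma pow_tech (v r' r : ℕ) (hv : 1 ≤ v) (hr : r' ≤ r) :
    2 ^ (v + r') + 2 ^ r ≤ 2 ^ (v + r) + 2 ^ r' := by
  obtain ⟨u, rfl⟩ := Nat.exists_eq_add_of_le hr
  have e1 : (2:ℕ) ^ (v + r') = 2 ^ v * 2 ^ r' := pow_add 2 v r'
  have e2 : (2:ℕ) ^ (r' + u) = 2 ^ r' * 2 ^ u := pow_add 2 r' u
  have e3 : (2:ℕ) ^ (v + (r' + u)) = 2 ^ v * (2 ^ r' * 2 ^ u) := by
    rw [pow_add, pow_add]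
  rw [e1, e2, e3]
  have h1 : (1:ℕ) ≤ 2 ^ u := Nat.one_le_two_pow
  have h2 : (1:ℕ) ≤ 2 ^ v := Nat.one_le_two_pow
  have h3 : (1:ℕ) ≤ 2 ^ r' := Nat.one_le_two_pow
  zify
  nlinarith [mul_nonneg (mul_nonneg (sub_nonneg.mpr (by exact_mod_cast h1 : (1:ℤ) ≤ 2 ^ u))
    (sub_nonneg.mpr (by exact_mod_cast h2 : (1:ℤ) ≤ 2 ^ v)))
    (by positivity : (0:ℤ) ≤ 2 ^ r')]

/-- base fact: r + v + 2^r ≤ 2^(v+r) for v ≥ 1 -/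
lemma pow_tech2 (v r : ℕ) (hv : 1 ≤ v) : r + v + 2 ^ r ≤ 2 ^ (v + r) := by
  obtain ⟨u, rfl⟩ := Nat.exists_eq_add_of_le hv
  clear hv
  induction u with
  | zero =>
    have h1 : r + 1 ≤ 2 ^ r := by have := Nat.lt_two_pow_self (n := r); omega
    have h2 : (2:ℕ) ^ (1 + 0 + r) = 2 ^ r + 2 ^ r := by
      rw [show 1 + 0 + r = r + 1 by omega, pow_succ]; ring
    omega
  | succ u ih =>
    have h2 : (2:ℕ) ^ (1 + (u + 1) + r) = 2 ^ (1 + u + r) + 2 ^ (1 + u + r) := by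
      rw [show 1 + (u + 1) + r = (1 + u + r) + 1 by omega, pow_succ]; ring
    have h3 : (1:ℕ) ≤ 2 ^ (1 + u + r) := Nat.one_le_two_pow
    omega

/-- Phase 2 -/
lemma phase2 (f : G n → ZMod 2) (V : Submodule (ZMod 2) (G n)) (S₀ : Finset (G n))
    (v : ℕ) (hv : 1 ≤ v) (hrankV : finrank (ZMod 2) V = v)
    (hCV : CInv f V S₀) (hcard₀ : 2 ^ (n + 1) ≤ S₀.card * 2 ^ (2 ^ v))
    (r : ℕ) (hmain : 2 ^ (v + r) + (v + r) ≤ n + 2 ^ r) :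
    ∃ (W : Submodule (ZMod 2) (G n)) (S : Finset (G n)),
      V ≤ W ∧ finrank (ZMod 2) W = v + r ∧ TInv W S ∧ S ⊆ S₀ ∧
        2 ^ (n + 2 ^ r) ≤ S.card * 2 ^ (2 ^ (v + r)) := by
  induction r with
  | zero =>
    refine ⟨V, S₀, le_refl V, by simpa using hrankV, ?_, Finset.Subset.refl S₀, ?_⟩
    · intro x hx w hw; exact (hCV x hx w hw).1
    · simpa using hcard₀
  | succ r ih =>
    -- hmain for r
    have hmono := pow_tech v r (r+1) hv (by omega)
    have hstep : 2 ^ (v + r) + (v + r) ≤ n + 2 ^ r := by omega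
    obtain ⟨W, S, hVW, hrankW, hT, hsub, hcard⟩ := ih hstep
    -- exponents
    have hB' : (v + r) + 2 ^ r ≤ 2 ^ (v + r) := by
      have := pow_tech2 v r hv
      omega
    have hφdef : (n + 2 ^ r - 2 ^ (v + r)) + 2 ^ (v + r) = n + 2 ^ r := by omega
    set φ := n + 2 ^ r - 2 ^ (v + r) with hφ
    -- φ' from hmain at r+1
    have hvr1 : 2 ^ (v + (r + 1)) ≤ n + 2 ^ (r + 1) := by omega
    have hφ'def : (n + 2 ^ (r+1) - 2 ^ (v + (r+1))) + 2 ^ (v + (r+1)) = n + 2 ^ (r+1) := by omega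
    set φ' := n + 2 ^ (r+1) - 2 ^ (v + (r+1)) with hφ'2
    have hpows : (2:ℕ) ^ (r + 1) = 2 ^ r + 2 ^ r := by rw [pow_succ]; ring
    have hpows2 : (2:ℕ) ^ (v + (r + 1)) = 2 ^ (v + r) + 2 ^ (v + r) := by
      rw [show v + (r+1) = (v + r) + 1 by omega, pow_succ]; ring
    have h2φ : φ + φ = φ' + n := by omega
    have hφw : v + r ≤ φ := by omega
    have hBB : φ + (v + r) ≤ n := by omega
    have hC1 : 1 ≤ φ' := by omega
    have hs : 2 ^ φ ≤ S.card := by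
      have h1 : 2 ^ φ * 2 ^ (2 ^ (v + r)) = 2 ^ (n + 2 ^ r) := by
        rw [← pow_add]; congr 1 <;> omega
      rw [← h1] at hcard
      exact Nat.le_of_mul_le_mul_right hcard (pow_pos (by norm_num) _)
    have hkey := key2 n (v + r) φ φ' S.card h2φ hφw hBB hC1 hs
    have hcount : (2 ^ φ' - 1) * 2 ^ n + 2 ^ (finrank (ZMod 2) W) * S.card <
        (∑ γ : ZMod 2, (S.filter (fun x => (fun _ => (0:ZMod 2)) x = γ)).card ^ 2)
          + (2 ^ φ' - 1) * 2 ^ (finrank (ZMod 2) W) := by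
      rw [hrankW, sumsq_trivial (fun _ => (0:ZMod 2)) (fun _ => rfl) S]
      omega
    obtain ⟨b, hb, hcnt⟩ := counting (fun _ => 0) S W ((tinv_iff W S).mpr hT) _ hcount
    refine ⟨W ⊔ Submodule.span (ZMod 2) {b},
      S.filter (fun x => x + b ∈ S ∧ (fun _ => (0:ZMod 2)) (x + b) = (fun _ => (0:ZMod 2)) x),
      ?_, ?_, ?_, ?_, ?_⟩
    · exact le_trans hVW le_sup_left
    · rw [finrank_sup_span W b hb, hrankW]; omega
    · have := cinv_step (fun _ => 0) W S ((tinv_iff W S).mpr hT) b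
      exact fun x hx w hw => (this x hx w hw).1
    · exact le_trans (Finset.filter_subset _ _) hsub
    · have hge : 2 ^ φ' ≤ (S.filter (fun x => x + b ∈ S ∧
          (fun _ => (0:ZMod 2)) (x + b) = (fun _ => (0:ZMod 2)) x)).card := by
        have h1 : (1:ℕ) ≤ 2 ^ φ' := Nat.one_le_two_pow
        have heq : cnt (fun _ => (0:ZMod 2)) S b = (S.filter (fun x => x + b ∈ S ∧
          (fun _ => (0:ZMod 2)) (x + b) = (fun _ => (0:ZMod 2)) x)).card := rfl
        omega
      calc 2 ^ (n + 2 ^ (r + 1)) = 2 ^ φ' * 2 ^ (2 ^ (v + (r + 1))) := by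
            rw [← pow_add]; congr 1 <;> omega
        _ ≤ _ := Nat.mul_le_mul_right _ hge


lemma buildFlat (k d : ℕ) (f : BF n) (V W' : Submodule (ZMod 2) (G n))
    (hVW : V ≤ W') (x0 : G n) (hrank : finrank (ZMod 2) W' = k)
    (hdim : k ≤ finrank (ZMod 2) V + d)
    (hconst : ∀ z ∈ W', ∀ u ∈ V, f (x0 + z + u) = f (x0 + z)) :
    IsFlat ((fun w => x0 + w) '' (W' : Set (G n))) k ∧
      DegLE f ((fun w => x0 + w) '' (W' : Set (G n))) d := by
  refine ⟨⟨W', x0, hrank, rfl⟩, ?_⟩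
  intro B hB hBA
  obtain ⟨U, u, hU, rfl⟩ := hB
  -- the base point of B lies in A
  have hu0 : u ∈ (fun w => x0 + w) '' (W' : Set (G n)) := by
    apply hBA
    exact ⟨0, U.zero_mem, by simp⟩
  obtain ⟨w0, hw0, hw0e0⟩ := hu0
  have hw0e : x0 + w0 = u := hw0e0
  have hUW : U ≤ W' := by
    intro z hz
    obtain ⟨w1, hw1, hw1e0⟩ := hBA ⟨z, hz, rfl⟩
    have hw1e : x0 + w1 = u + z := hw1e0
    have h1 : x0 + (w0 + z) = x0 + w1 := by
      rw [hw1e, ← hw0e]; ring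
    have h2 : w0 + z = w1 := (add_left_cancel h1.symm).symm
    have hz2 : z = w1 + w0 := by
      rw [← h2]
      have h3 : w0 + z + w0 = z + (w0 + w0) := by ring
      rw [h3, addselfG, add_zero]
    rw [hz2]
    exact W'.add_mem hw1 hw0
  have hUVle : finrank (ZMod 2) ↥(U ⊔ V) ≤ k := by
    rw [← hrank]
    exact Submodule.finrank_mono (sup_le hUW hVW)
  have hsum : finrank (ZMod 2) ↥(U ⊔ V) + finrank (ZMod 2) ↥(U ⊓ V)
      = finrank (ZMod 2) ↥U + finrank (ZMod 2) ↥V :=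
    Submodule.finrank_sup_add_finrank_inf_eq U V
  have hpos : 0 < finrank (ZMod 2) ↥(U ⊓ V) := by
    rw [hU] at hsum
    omega
  have hne : U ⊓ V ≠ ⊥ := by
    intro h
    rw [h] at hpos
    simp [finrank_bot] at hpos
  obtain ⟨v0, hv0m, hv0⟩ := (Submodule.ne_bot_iff _).mp hne
  have hv0U : v0 ∈ U := hv0m.1
  have hv0V : v0 ∈ V := hv0m.2
  -- constancy along v0 on B
  have hconstB : ∀ y ∈ (fun w => u + w) '' (U : Set (G n)), f (y + v0) = f y := by
    rintro y ⟨z, hz, rfl⟩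
    have he : u + z = x0 + (w0 + z) := by rw [← hw0e]; ring
    have hmem : w0 + z ∈ W' := W'.add_mem hw0 (hUW hz)
    show f ((u + z) + v0) = f (u + z)
    rw [he]
    exact hconst (w0 + z) hmem v0 hv0V
  -- sum is zero by a fixed-point-free involution
  unfold flatSum
  apply Finset.sum_involution (fun a _ => a + v0)
  · intro a ha
    have haB : a ∈ (fun w => u + w) '' (U : Set (G n)) := (Set.Finite.mem_toFinset _).mp ha
    rw [hconstB a haB]
    have : ∀ t : ZMod 2, t + t = 0 := by decide
    exact this (f a)
  · intro a ha _
    intro h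
    apply hv0
    have : a + v0 = a + 0 := by rw [add_zero]; exact h
    exact add_left_cancel this
  · intro a ha
    rw [Set.Finite.mem_toFinset] at ha ⊢
    obtain ⟨z, hz, rfl⟩ := ha
    exact ⟨z + v0, U.add_mem hz hv0U, by ring⟩
  · intro a ha
    rw [add_assoc, addselfG, add_zero]

lemma pow_tech3 (a b : ℕ) : 2 ^ a + 2 ^ b ≤ 2 ^ (a + b) + 1 := by
  have h1 : (1:ℕ) ≤ 2 ^ a := Nat.one_le_two_pow
  have h2 : (1:ℕ) ≤ 2 ^ b := Nat.one_le_two_pow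
  have h3 : (2:ℕ) ^ (a + b) = 2 ^ a * 2 ^ b := pow_add 2 a b
  zify at *
  nlinarith [mul_nonneg (sub_nonneg.mpr h1) (sub_nonneg.mpr h2)]


lemma main (k d : ℕ) (hdk : d < k)
    (hn : 2 ^ (k - 1) + k - (if d = 0 then 0 else 2 ^ (d - 1)) ≤ n) (f : BF n) :
    ∃ A : Set (G n), IsFlat A k ∧ DegLE f A d := by
  rcases Nat.eq_zero_or_pos d with rfl | hd
  · -- d = 0
    replace hn : 2 ^ (k - 1) + k ≤ n := by simpa using hn
    have hk1 : 1 ≤ k := hdk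
    have hj : 2 ^ (k - 1) + (k - 1) ≤ n := by omega
    obtain ⟨W, S, hrank, hC, hcard⟩ := phase1 f (k - 1) hj
    have hA : (n + 1 - 2 ^ (k - 1)) + 2 ^ (k - 1) = n + 1 := by omega
    have hs : 2 ^ (n + 1 - 2 ^ (k - 1)) ≤ S.card := by
      have h1 : 2 ^ (n + 1 - 2 ^ (k - 1)) * 2 ^ (2 ^ (k - 1)) = 2 ^ (n + 1) := by
        rw [← pow_add]; congr 1 <;> omega
      rw [← h1] at hcard
      exact Nat.le_of_mul_le_mul_right hcard (pow_pos (by norm_num) _)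
    have hs2 : 2 ^ (k + 1) ≤ S.card :=
      le_trans (Nat.pow_le_pow_right (by norm_num) (by omega)) hs
    have hcount : 0 * 2 ^ n + 2 ^ (finrank (ZMod 2) W) * S.card <
        (∑ γ : ZMod 2, (S.filter (fun x => f x = γ)).card ^ 2)
          + 0 * 2 ^ (finrank (ZMod 2) W) := by
      rw [hrank]
      have hsum := two_sq (S.filter (fun x => f x = 0)).card
        (S.filter (fun x => f x = 1)).card S.card (filter_two f S)
      rw [sum_zmod2 (fun γ => (S.filter (fun x => f x = γ)).card ^ 2)]
      have hmul : 2 ^ (k + 1) * S.card ≤ S.card * S.card := Nat.mul_le_mul_right _ hs2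
      have hpow : (2:ℕ) ^ (k + 1) = 2 ^ (k - 1) * 4 := by
        conv_lhs => rw [show k + 1 = (k - 1) + 2 by omega]
        rw [pow_add]; norm_num
      have hmul4 : 4 * (2 ^ (k - 1) * S.card) ≤ S.card * S.card := by
        calc 4 * (2 ^ (k - 1) * S.card) = 2 ^ (k + 1) * S.card := by rw [hpow]; ring
          _ ≤ S.card * S.card := hmul
      have hspos : 0 < S.card := lt_of_lt_of_le (pow_pos (by norm_num) (k + 1)) hs2
      have hXpos : 0 < 2 ^ (k - 1) * S.card :=
        Nat.mul_pos (pow_pos (by norm_num) _) hspos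
      have hsq : S.card ^ 2 = S.card * S.card := pow_two S.card
      omega
    obtain ⟨b, hb, hcnt⟩ := counting f S W hC 0 hcount
    rw [cnt] at hcnt
    obtain ⟨x0, hx0f⟩ := Finset.card_pos.mp hcnt
    rw [Finset.mem_filter] at hx0f
    obtain ⟨hx0, hx0b, hx0c⟩ := hx0f
    set W' := W ⊔ Submodule.span (ZMod 2) {b} with hW'
    have hrk' : finrank (ZMod 2) W' = k := by
      rw [hW', finrank_sup_span W b hb, hrank]; omega
    have hconstall : ∀ z ∈ W', f (x0 + z) = f x0 := by
      intro z hz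
      rcases mem_sup_span W b z hz with ⟨w, hw, h | h⟩ <;> subst h
      · exact (hC x0 hx0 _ hw).2
      · have he : x0 + (w + b) = (x0 + b) + w := by ring
        rw [he, (hC (x0 + b) hx0b w hw).2, hx0c]
    have hconst : ∀ z ∈ W', ∀ u ∈ W', f (x0 + z + u) = f (x0 + z) := by
      intro z hz u hu
      have h1 : x0 + z + u = x0 + (z + u) := by ring
      rw [h1, hconstall _ (W'.add_mem hz hu), hconstall _ hz]
    obtain ⟨hA1, hA2⟩ := buildFlat k 0 f W' W' (le_refl W') x0 hrk' (by omega) hconst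
    exact ⟨_, hA1, hA2⟩
  · -- d ≥ 1
    have hd0 : d ≠ 0 := by omega
    rw [if_neg hd0] at hn
    set v := k - d with hv
    have hv1 : 1 ≤ v := by omega
    have htech : 2 ^ v + 2 ^ (d - 1) ≤ 2 ^ (k - 1) + 1 := by
      have h := pow_tech3 v (d - 1)
      have he : v + (d - 1) = k - 1 := by omega
      rw [he] at h
      exact h
    have h1 : (1:ℕ) ≤ 2 ^ v := Nat.one_le_two_pow
    have h2 : (1:ℕ) ≤ 2 ^ (d - 1) := Nat.one_le_two_pow
    have hj : 2 ^ v + v ≤ n := by omega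
    obtain ⟨V, S₁, hrankV, hCV, hcard₁⟩ := phase1 f v hj
    have hmain2 : 2 ^ (v + (d - 1)) + (v + (d - 1)) ≤ n + 2 ^ (d - 1) := by
      have he : v + (d - 1) = k - 1 := by omega
      rw [he]
      omega
    obtain ⟨W, S, hVW, hrankW, hT, hsub, hcard₂⟩ :=
      phase2 f V S₁ v hv1 hrankV hCV hcard₁ (d - 1) hmain2
    have hkv : v + (d - 1) = k - 1 := by omega
    rw [hkv] at hrankW hcard₂
    have hφ : (n + 2 ^ (d - 1) - 2 ^ (k - 1)) + 2 ^ (k - 1) = n + 2 ^ (d - 1) := by omega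
    have hs : 2 ^ (n + 2 ^ (d - 1) - 2 ^ (k - 1)) ≤ S.card := by
      have h1' : 2 ^ (n + 2 ^ (d - 1) - 2 ^ (k - 1)) * 2 ^ (2 ^ (k - 1))
          = 2 ^ (n + 2 ^ (d - 1)) := by
        rw [← pow_add]; congr 1 <;> omega
      rw [← h1'] at hcard₂
      exact Nat.le_of_mul_le_mul_right hcard₂ (pow_pos (by norm_num) _)
    have hφk : k ≤ n + 2 ^ (d - 1) - 2 ^ (k - 1) := by omega
    have hs2 : 2 ^ k ≤ S.card := le_trans (Nat.pow_le_pow_right (by norm_num) hφk) hs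
    have hcount : 0 * 2 ^ n + 2 ^ (finrank (ZMod 2) W) * S.card <
        (∑ γ : ZMod 2, (S.filter (fun x => (fun _ => (0:ZMod 2)) x = γ)).card ^ 2)
          + 0 * 2 ^ (finrank (ZMod 2) W) := by
      rw [hrankW, sumsq_trivial (fun _ => (0:ZMod 2)) (fun _ => rfl) S]
      have hmul : 2 ^ k * S.card ≤ S.card * S.card := Nat.mul_le_mul_right _ hs2
      have hpow : (2:ℕ) ^ k = 2 ^ (k - 1) * 2 := by
        conv_lhs => rw [show k = (k - 1) + 1 by omega]
        rw [pow_succ]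
      have hmul2 : 2 * (2 ^ (k - 1) * S.card) ≤ S.card * S.card := by
        calc 2 * (2 ^ (k - 1) * S.card) = 2 ^ k * S.card := by rw [hpow]; ring
          _ ≤ S.card * S.card := hmul
      have hspos : 0 < S.card := lt_of_lt_of_le (pow_pos (by norm_num) k) hs2
      have hXpos : 0 < 2 ^ (k - 1) * S.card :=
        Nat.mul_pos (pow_pos (by norm_num) _) hspos
      have hsq : S.card ^ 2 = S.card * S.card := pow_two S.card
      omega
    obtain ⟨b, hb, hcnt⟩ := counting (fun _ => (0:ZMod 2)) S W ((tinv_iff W S).mpr hT) 0 hcount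
    rw [cnt] at hcnt
    obtain ⟨x0, hx0f⟩ := Finset.card_pos.mp hcnt
    rw [Finset.mem_filter] at hx0f
    obtain ⟨hx0, hx0b, -⟩ := hx0f
    set W' := W ⊔ Submodule.span (ZMod 2) {b} with hW'
    have hrk' : finrank (ZMod 2) W' = k := by
      rw [hW', finrank_sup_span W b hb, hrankW]; omega
    have hmemS : ∀ z ∈ W', x0 + z ∈ S₁ := by
      intro z hz
      rcases mem_sup_span W b z hz with ⟨w, hw, h | h⟩ <;> subst h
      · exact hsub (hT x0 hx0 _ hw)
      · have he : x0 + (w + b) = (x0 + b) + w := by ring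
        rw [he]
        exact hsub (hT (x0 + b) hx0b w hw)
    have hconst : ∀ z ∈ W', ∀ u ∈ V, f (x0 + z + u) = f (x0 + z) := by
      intro z hz u hu
      exact (hCV (x0 + z) (hmemS z hz) u hu).2
    have hdim : k ≤ finrank (ZMod 2) V + d := by rw [hrankV]; omega
    obtain ⟨hA1, hA2⟩ :=
      buildFlat k d f V W' (le_trans hVW le_sup_left) x0 hrk' hdim hconst
    exact ⟨_, hA1, hA2⟩


end Stmt18Aux

/-- For `k > d ≥ 0` and `n ≥ 2^(k-1) + k - ⌊2^(d-1)⌋`, every Boolean function on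
`𝔽₂ⁿ` has degree at most `d` on some `k`-dimensional flat; i.e. `g(n,k) ≤ d`. -/
theorem stmt18 {n k d : ℕ} (hdk : d < k)
    (hn : 2 ^ (k - 1) + k - (if d = 0 then 0 else 2 ^ (d - 1)) ≤ n) :
    (∀ f : BF n, ∃ A : Set (Fin n → ZMod 2), IsFlat A k ∧ degOn f A ≤ d) ∧
    gdeg n k ≤ d := by
  have main : ∀ f : BF n, ∃ A : Set (Fin n → ZMod 2), IsFlat A k ∧ DegLE f A d :=
    fun f => Stmt18Aux.main k d hdk hn f
  constructor
  · intro f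
    obtain ⟨A, hA, hdeg⟩ := main f
    exact ⟨A, hA, Nat.sInf_le hdeg⟩
  · apply csSup_le
    · exact ⟨alphaDeg (fun _ => 0) k, ⟨fun _ => 0, rfl⟩⟩
    · rintro m ⟨f, rfl⟩
      obtain ⟨A, hA, hdeg⟩ := main f
      have h1 : degOn f A ≤ d := Nat.sInf_le hdeg
      calc alphaDeg f k ≤ degOn f A := Nat.sInf_le ⟨A, hA, rfl⟩
        _ ≤ d := h1
end
end
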